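/- The thresholds are maximized at the last probing stage: t_n ≤ t_{N−1} for every n with 1 ≤ n ≤ N−1. -/

import Mathlib

open MeasureTheory Set

set_option maxHeartbeats 1000000 in
/-- The thresholds are maximized at the last probing stage:
`t n ≤ t (N-1)` for every `1 ≤ n ≤ N-1`. -/
theorem thresholds_le_last
    (N : ℕ) (hN : 2 ≤ N) (τ : ℝ) (hτ : 0 < τ)
    (μ : Measure ℝ) [IsProbabilityMeasure μ]
    (hsupp : μ {x : ℝ | x < 0} = 0) (hmean : Integrable id μ)
    (hposμ : 0 < μ (Ioi (0 : ℝ)))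
    (c : ℕ → ℝ) (hc : ∀ n : ℕ, c n = 1 / (1 + (n : ℝ) * τ))
    (V : ℕ → ℝ → ℝ)
    (hVN : ∀ x : ℝ, 0 ≤ x → V N x = c N * x)
    (hVn : ∀ n : ℕ, 1 ≤ n → n ≤ N - 1 → ∀ x : ℝ, 0 ≤ x →
      V n x = max (c n * x) (∫ y, V (n + 1) (max x y) ∂μ))
    (t : ℕ → ℝ)
    (ht : ∀ n : ℕ, 1 ≤ n → n ≤ N - 1 →
      (0 < t n ∧ c n * t n = ∫ y, V (n + 1) (max (t n) y) ∂μ) ∧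
      (∀ s : ℝ, 0 < s → c n * s = (∫ y, V (n + 1) (max s y) ∂μ) → s = t n)) :
    ∀ n : ℕ, 1 ≤ n → n ≤ N - 1 → t n ≤ t (N - 1) := by
  -- basic facts about c
  have cpos : ∀ n : ℕ, 0 < c n := by
    intro n; rw [hc]; positivity
  have cle : ∀ n : ℕ, c (n + 1) ≤ c n := by
    intro n
    rw [hc, hc]
    have h1 : (0:ℝ) < 1 + (n:ℝ) * τ := by positivity
    rw [div_le_div_iff₀ (by push_cast; positivity) h1]
    push_cast
    nlinarith
  have cle1 : ∀ n : ℕ, c n ≤ 1 := by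
    intro n
    rw [hc]
    rw [div_le_one (by positivity)]
    have : (0:ℝ) ≤ (n:ℝ) * τ := by positivity
    linarith
  have logconv : ∀ n : ℕ, c (n+1) * c (n+1) ≤ c n * c (n+2) := by
    intro n
    rw [hc, hc, hc]
    have h0 : (0:ℝ) < 1 + (n:ℝ) * τ := by positivity
    have h1 : (0:ℝ) < 1 + ((n:ℝ)+1) * τ := by nlinarith
    have h2 : (0:ℝ) < 1 + ((n:ℝ)+2) * τ := by nlinarith
    rw [div_mul_div_comm, div_mul_div_comm]
    rw [div_le_div_iff₀ (by push_cast; nlinarith) (by push_cast; nlinarith)]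
    push_cast
    nlinarith [sq_nonneg τ]
  -- the mean of |y|
  set B : ℝ := ∫ y, |y| ∂μ with hBdef
  have hB : Integrable (fun y : ℝ => |y|) μ := by simpa using hmean.abs
  have hB0 : 0 ≤ B := integral_nonneg fun y => abs_nonneg y
  have hmax_int : ∀ x : ℝ, 0 ≤ x → Integrable (fun y : ℝ => max x y) μ := by
    intro x hx
    have hmono : Monotone fun y : ℝ => max x y := fun a b hab => max_le_max le_rfl hab
    have hgint : Integrable (fun y : ℝ => x + |y|) μ := (integrable_const x).add hB
    refine hgint.mono hmono.measurable.aestronglyMeasurable ?_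
    filter_upwards with y
    have h0 : 0 ≤ max x y := le_trans hx (le_max_left _ _)
    have hub : max x y ≤ x + |y| := max_le (by nlinarith [abs_nonneg y]) (by nlinarith [le_abs_self y])
    show ‖max x y‖ ≤ ‖x + |y|‖
    rw [Real.norm_eq_abs, Real.norm_eq_abs, abs_of_nonneg h0,
      abs_of_nonneg (by nlinarith [abs_nonneg y] : (0:ℝ) ≤ x + |y|)]
    exact hub
  -- main backward induction on the structure of V
  have key : ∀ k m : ℕ, m + k = N → 1 ≤ m →
      (∀ x : ℝ, 0 ≤ x → c m * x ≤ V m x) ∧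
      (∀ a b : ℝ, 0 ≤ a → a ≤ b → V m a ≤ V m b) ∧
      (∀ a b : ℝ, 0 ≤ a → a ≤ b → V m b ≤ V m a + c m * (b - a)) ∧
      (∀ x : ℝ, 0 ≤ x → V m x ≤ x + (k : ℝ) * B) ∧
      (∀ x : ℝ, 0 ≤ x → Integrable (fun y => V m (max x y)) μ) := by
    intro k
    induction k with
    | zero =>
      intro m hm _
      have hmN : m = N := by omega
      subst hmN
      have lbm : ∀ x : ℝ, 0 ≤ x → c m * x ≤ V m x := by
        intro x hx; rw [hVN x hx]
      have monom : ∀ a b : ℝ, 0 ≤ a → a ≤ b → V m a ≤ V m b := by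
        intro a b ha hab
        rw [hVN a ha, hVN b (ha.trans hab)]
        exact mul_le_mul_of_nonneg_left hab (cpos m).le
      have lipm : ∀ a b : ℝ, 0 ≤ a → a ≤ b → V m b ≤ V m a + c m * (b - a) := by
        intro a b ha hab
        rw [hVN a ha, hVN b (ha.trans hab)]
        exact le_of_eq (by ring)
      have ubm : ∀ x : ℝ, 0 ≤ x → V m x ≤ x + ((0:ℕ) : ℝ) * B := by
        intro x hx
        rw [hVN x hx]
        have := cle1 m
        have h := cpos m
        push_cast
        nlinarith
      refine ⟨lbm, monom, lipm, ubm, ?_⟩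
      intro x hx
      have hfun : (fun y : ℝ => V m (max x y)) = fun y => c m * max x y :=
        funext fun y => hVN _ (le_trans hx (le_max_left _ _))
      rw [hfun]
      exact (hmax_int x hx).const_mul _
    | succ k ih =>
      intro m hmk hm1
      obtain ⟨lb', mono', lip', ub', int'⟩ := ih (m+1) (by omega) (by omega)
      have hmN : m ≤ N - 1 := by omega
      have hrec : ∀ x : ℝ, 0 ≤ x → V m x = max (c m * x) (∫ y, V (m+1) (max x y) ∂μ) :=
        fun x hx => hVn m hm1 hmN x hx
      have lbm : ∀ x : ℝ, 0 ≤ x → c m * x ≤ V m x := by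
        intro x hx; rw [hrec x hx]; exact le_max_left _ _
      have monom : ∀ a b : ℝ, 0 ≤ a → a ≤ b → V m a ≤ V m b := by
        intro a b ha hab
        rw [hrec a ha, hrec b (ha.trans hab)]
        apply max_le_max
        · exact mul_le_mul_of_nonneg_left hab (cpos m).le
        · refine integral_mono (int' a ha) (int' b (ha.trans hab)) ?_
          intro y
          exact mono' _ _ (le_trans ha (le_max_left _ _)) (max_le_max hab le_rfl)
      have lipm : ∀ a b : ℝ, 0 ≤ a → a ≤ b → V m b ≤ V m a + c m * (b - a) := by
        intro a b ha hab
        have hb := ha.trans hab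
        rw [hrec a ha, hrec b hb]
        apply max_le
        · have h : c m * b = c m * a + c m * (b - a) := by ring
          rw [h]
          exact add_le_add (le_max_left _ _) le_rfl
        · have hptw : ∀ y : ℝ, V (m+1) (max b y) ≤ V (m+1) (max a y) + c (m+1) * (b - a) := by
            intro y
            have h0 : 0 ≤ max a y := le_trans ha (le_max_left _ _)
            have hle : max a y ≤ max b y := max_le_max hab le_rfl
            have hlip := lip' (max a y) (max b y) h0 hle
            have hd : max b y ≤ max a y + (b - a) :=
              max_le (by linarith [le_max_left a y]) (by linarith [le_max_right a y])
            nlinarith [(cpos (m+1)).le]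
          have hadd : (∫ y, (V (m+1) (max a y) + c (m+1) * (b - a)) ∂μ)
              = (∫ y, V (m+1) (max a y) ∂μ) + c (m+1) * (b - a) := by
            rw [integral_add (int' a ha) (integrable_const _), integral_const, probReal_univ,
              one_smul]
          have h2 : (∫ y, V (m+1) (max b y) ∂μ)
              ≤ ∫ y, (V (m+1) (max a y) + c (m+1) * (b - a)) ∂μ :=
            integral_mono (int' b hb) ((int' a ha).add (integrable_const _)) hptw
          rw [hadd] at h2
          refine h2.trans ?_
          exact add_le_add (le_max_right _ _) (mul_le_mul_of_nonneg_right (cle m) (by linarith))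
      have ubm : ∀ x : ℝ, 0 ≤ x → V m x ≤ x + ((k+1:ℕ) : ℝ) * B := by
        intro x hx
        rw [hrec x hx]
        apply max_le
        · have := cle1 m
          have hk : (0:ℝ) ≤ ((k+1:ℕ) : ℝ) := Nat.cast_nonneg _
          nlinarith [cpos m]
        · have hpt : ∀ y : ℝ, V (m+1) (max x y) ≤ x + |y| + (k:ℝ) * B := by
            intro y
            have h0 : 0 ≤ max x y := le_trans hx (le_max_left _ _)
            have hub := ub' (max x y) h0
            have hm2 : max x y ≤ x + |y| :=
              max_le (by nlinarith [abs_nonneg y]) (by nlinarith [le_abs_self y])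
            linarith
          have hf1 : Integrable (fun y : ℝ => x + |y|) μ := (integrable_const x).add hB
          have hgint : Integrable (fun y : ℝ => x + |y| + (k:ℝ) * B) μ :=
            hf1.add (integrable_const _)
          have hadd : (∫ y, (x + |y| + (k:ℝ) * B) ∂μ) = x + B + (k:ℝ) * B := by
            rw [integral_add hf1 (integrable_const _), integral_add (integrable_const x) hB,
              integral_const, integral_const, probReal_univ, one_smul, one_smul]
          have h2 : (∫ y, V (m+1) (max x y) ∂μ) ≤ ∫ y, (x + |y| + (k:ℝ) * B) ∂μ :=
            integral_mono (int' x hx) hgint hpt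
          rw [hadd] at h2
          push_cast
          linarith
      refine ⟨lbm, monom, lipm, ubm, ?_⟩
      intro x hx
      have hmono : Monotone fun y : ℝ => V m (max x y) := by
        intro a b hab
        exact monom _ _ (le_trans hx (le_max_left _ _)) (max_le_max le_rfl hab)
      have hgint : Integrable (fun y : ℝ => x + |y| + ((k+1:ℕ):ℝ) * B) μ :=
        ((integrable_const x).add hB).add (integrable_const _)
      refine hgint.mono hmono.measurable.aestronglyMeasurable ?_
      filter_upwards with y
      have h0 : 0 ≤ max x y := le_trans hx (le_max_left _ _)
      have hVnn : 0 ≤ V m (max x y) := le_trans (mul_nonneg (cpos m).le h0) (lbm _ h0)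
      have hub := ubm (max x y) h0
      have hm2 : max x y ≤ x + |y| :=
        max_le (by nlinarith [abs_nonneg y]) (by nlinarith [le_abs_self y])
      have hk : (0:ℝ) ≤ ((k+1:ℕ) : ℝ) := Nat.cast_nonneg _
      show ‖V m (max x y)‖ ≤ ‖x + |y| + ((k+1:ℕ):ℝ) * B‖
      rw [Real.norm_eq_abs, Real.norm_eq_abs, abs_of_nonneg hVnn,
        abs_of_nonneg (by nlinarith [abs_nonneg y] : (0:ℝ) ≤ x + |y| + ((k+1:ℕ):ℝ) * B)]
      linarith
  -- the one-step comparison of thresholds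
  have step : ∀ n : ℕ, 1 ≤ n → n + 1 ≤ N - 1 → t n ≤ t (n + 1) := by
    intro n hn1 hn2
    obtain ⟨⟨htpos, hteq⟩, huniq⟩ := ht n hn1 (by omega)
    obtain ⟨⟨hTpos, hTeq⟩, _⟩ := ht (n+1) (by omega) hn2
    set T := t (n+1) with hTdef
    obtain ⟨lb1, mono1, lip1, ub1, int1⟩ := key (N - (n+1)) (n+1) (by omega) (by omega)
    obtain ⟨lb2, mono2, lip2, ub2, int2⟩ := key (N - (n+2)) (n+2) (by omega) (by omega)
    have hT0 : (0:ℝ) ≤ T := hTpos.le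
    -- Claim A : for z ≥ T, the continuation value at stage n+1 is at most c(n+1) z
    have claimA : ∀ z : ℝ, T ≤ z → (∫ y, V (n+2) (max z y) ∂μ) ≤ c (n+1) * z := by
      intro z hz
      have hz0 : 0 ≤ z := hT0.trans hz
      have hpt : ∀ y : ℝ, V (n+2) (max z y) ≤ V (n+2) (max T y) + c (n+2) * (z - T) := by
        intro y
        have h0 : 0 ≤ max T y := le_trans hT0 (le_max_left _ _)
        have hle : max T y ≤ max z y := max_le_max hz le_rfl
        have hlip := lip2 (max T y) (max z y) h0 hle
        have hd : max z y ≤ max T y + (z - T) :=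
          max_le (by linarith [le_max_left T y]) (by linarith [le_max_right T y])
        nlinarith [(cpos (n+2)).le]
      have hadd : (∫ y, (V (n+2) (max T y) + c (n+2) * (z - T)) ∂μ)
          = (∫ y, V (n+2) (max T y) ∂μ) + c (n+2) * (z - T) := by
        rw [integral_add (int2 T hT0) (integrable_const _), integral_const, probReal_univ,
          one_smul]
      have h2 : (∫ y, V (n+2) (max z y) ∂μ)
          ≤ ∫ y, (V (n+2) (max T y) + c (n+2) * (z - T)) ∂μ :=
        integral_mono (int2 z hz0) ((int2 T hT0).add (integrable_const _)) hpt
      rw [hadd, ← hTeq] at h2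
      have h3 : c (n+2) * (z - T) ≤ c (n+1) * (z - T) :=
        mul_le_mul_of_nonneg_right (cle (n+1)) (by linarith)
      nlinarith
    -- Claim B : V (n+1) is linear beyond T
    have claimB : ∀ z : ℝ, T ≤ z → V (n+1) z = c (n+1) * z := by
      intro z hz
      rw [hVn (n+1) (by omega) hn2 z (hT0.trans hz)]
      exact max_eq_left (claimA z hz)
    -- Claim C
    have claimC : (∫ y, V (n+1) (max T y) ∂μ) = c (n+1) * ∫ y, max T y ∂μ := by
      have hfun : (fun y : ℝ => V (n+1) (max T y)) = fun y => c (n+1) * max T y :=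
        funext fun y => claimB _ (le_max_left _ _)
      rw [hfun, integral_const_mul]
    -- Claim D
    have claimD : c (n+2) * (∫ y, max T y ∂μ) ≤ c (n+1) * T := by
      rw [← integral_const_mul, hTeq]
      refine integral_mono ((hmax_int T hT0).const_mul _) (int2 T hT0) ?_
      intro y
      exact lb2 _ (le_trans hT0 (le_max_left _ _))
    have hMT0 : 0 ≤ ∫ y, max T y ∂μ := integral_nonneg fun y => le_trans hT0 (le_max_left _ _)
    -- Claim E
    have claimE : (∫ y, V (n+1) (max T y) ∂μ) ≤ c n * T := by
      rw [claimC]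
      have hlc := logconv n
      nlinarith [mul_le_mul_of_nonneg_left claimD (cpos (n+1)).le,
        mul_le_mul_of_nonneg_right hlc hT0, cpos (n+2), hMT0, cpos n, cpos (n+1)]
    -- the map s ↦ ∫ V (n+1) (max s y) dμ - c n s is antitone on [0,∞)
    have anti : ∀ a b : ℝ, 0 ≤ a → a ≤ b →
        (∫ y, V (n+1) (max b y) ∂μ) - c n * b ≤ (∫ y, V (n+1) (max a y) ∂μ) - c n * a := by
      intro a b ha hab
      have hb := ha.trans hab
      have hpt : ∀ y : ℝ, V (n+1) (max b y) ≤ V (n+1) (max a y) + c (n+1) * (b - a) := by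
        intro y
        have h0 : 0 ≤ max a y := le_trans ha (le_max_left _ _)
        have hle : max a y ≤ max b y := max_le_max hab le_rfl
        have hlip := lip1 (max a y) (max b y) h0 hle
        have hd : max b y ≤ max a y + (b - a) :=
          max_le (by linarith [le_max_left a y]) (by linarith [le_max_right a y])
        nlinarith [(cpos (n+1)).le]
      have hadd : (∫ y, (V (n+1) (max a y) + c (n+1) * (b - a)) ∂μ)
          = (∫ y, V (n+1) (max a y) ∂μ) + c (n+1) * (b - a) := by
        rw [integral_add (int1 a ha) (integrable_const _), integral_const, probReal_univ,
          one_smul]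
      have h2 : (∫ y, V (n+1) (max b y) ∂μ)
          ≤ ∫ y, (V (n+1) (max a y) + c (n+1) * (b - a)) ∂μ :=
        integral_mono (int1 b hb) ((int1 a ha).add (integrable_const _)) hpt
      rw [hadd] at h2
      nlinarith [mul_le_mul_of_nonneg_right (cle n) (sub_nonneg.mpr hab)]
    by_contra hcon
    push_neg at hcon
    have h3 := anti T (t n) hT0 hcon.le
    have hFT : (∫ y, V (n+1) (max T y) ∂μ) - c n * T ≤ 0 := by linarith
    have hFt : (∫ y, V (n+1) (max (t n) y) ∂μ) - c n * t n = 0 := by linarith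
    have hFTeq : c n * T = ∫ y, V (n+1) (max T y) ∂μ := by linarith
    have hTn := huniq T hTpos hFTeq
    linarith
  -- chain the one-step comparisons
  have chain : ∀ k : ℕ, ∀ n : ℕ, 1 ≤ n → n + k ≤ N - 1 → t n ≤ t (n + k) := by
    intro k
    induction k with
    | zero => intro n _ _; exact le_rfl
    | succ k ih =>
      intro n hn hnk
      have h1 := ih n hn (by omega)
      have h2 := step (n + k) (by omega) (by omega)
      calc t n ≤ t (n + k) := h1
        _ ≤ t (n + k + 1) := h2
  intro n hn hnN
  have h := chain (N - 1 - n) n hn (by omega)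
  have heq : n + (N - 1 - n) = N - 1 := by omega
  rw [heq] at h
  exact h
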